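/- Let G be a connected weighted graph on n ≥ 2 vertices with Laplacian L_G, and let H be a weighted graph on the same vertices whose Laplacian L_H makes it a (1±ε)-spectral sparsifier of G with 0 ≤ ε < 1. Then for all x ∈ ℝⁿ: (1/(1+ε))·xᵀL_G⁺x ≤ xᵀL_H⁺x ≤ (1/(1−ε))·xᵀL_G⁺x, where L_G⁺ and L_H⁺ are the Moore–Penrose pseudoinverses of L_G and L_H. -/

import Mathlib

open Matrix BigOperators Finset
open scoped Classical

noncomputable section

/-- The Laplacian of a weighted graph given by its adjacency matrix. -/
def Lap {n : ℕ} (A : Matrix (Fin n) (Fin n) ℝ) : Matrix (Fin n) (Fin n) ℝ :=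
  Matrix.diagonal (fun i => ∑ j, A i j) - A

/-- `A` is a weighted graph adjacency matrix: symmetric, nonnegative, zero diagonal. -/
def IsWeightedGraph {n : ℕ} (A : Matrix (Fin n) (Fin n) ℝ) : Prop :=
  A.IsSymm ∧ (∀ i j, 0 ≤ A i j) ∧ (∀ i, A i i = 0)

/-- The graph with edge set `{(i,j) : A i j > 0}` is connected. -/
def GraphConnected {n : ℕ} (A : Matrix (Fin n) (Fin n) ℝ) : Prop :=
  (SimpleGraph.fromRel (fun i j => 0 < A i j)).Connected

/-- `LH` is the Laplacian of a `(1±ε)`-spectral sparsifier of the graph with Laplacian `LG`. -/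
def IsSparsifier {n : ℕ} (LG LH : Matrix (Fin n) (Fin n) ℝ) (ε : ℝ) : Prop :=
  ∀ x : Fin n → ℝ,
    (1 - ε) * (x ⬝ᵥ LG.mulVec x) ≤ x ⬝ᵥ LH.mulVec x ∧
    x ⬝ᵥ LH.mulVec x ≤ (1 + ε) * (x ⬝ᵥ LG.mulVec x)

/-- Orthogonal projection `I - (1/n)·1·1ᵀ` onto `F = {f : ⟨f,1⟩ = 0}`. -/
def PF (n : ℕ) : Matrix (Fin n) (Fin n) ℝ :=
  1 - (n : ℝ)⁻¹ • Matrix.of (fun _ _ => (1 : ℝ))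

/-- Diagonal 0/1 matrix selecting the coordinates in `S`. -/
def IS {n : ℕ} (S : Finset (Fin n)) : Matrix (Fin n) (Fin n) ℝ :=
  Matrix.diagonal (fun i => if i ∈ S then (1 : ℝ) else 0)

/-- Euclidean norm of a vector. -/
def vnorm {n : ℕ} (x : Fin n → ℝ) : ℝ := Real.sqrt (∑ i, (x i) ^ 2)

/-- `lam` is the smallest eigenvalue of `L` restricted to `F = {x : ⟨x,1⟩ = 0}`, i.e. the
minimum of the Rayleigh quotient over nonzero vectors of `F`. -/
def IsLam1 {n : ℕ} (L : Matrix (Fin n) (Fin n) ℝ) (lam : ℝ) : Prop :=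
  IsLeast {r | ∃ x : Fin n → ℝ, x ≠ 0 ∧ (∑ i, x i) = 0 ∧
    r = (x ⬝ᵥ L.mulVec x) / (∑ i, (x i) ^ 2)} lam

/-- `lam` is the largest eigenvalue of `L`: the maximum of the Rayleigh quotient. -/
def IsLamN {n : ℕ} (L : Matrix (Fin n) (Fin n) ℝ) (lam : ℝ) : Prop :=
  IsGreatest {r | ∃ x : Fin n → ℝ, x ≠ 0 ∧
    r = (x ⬝ᵥ L.mulVec x) / (∑ i, (x i) ^ 2)} lam

/-- `Lp` is the Moore–Penrose pseudoinverse of `L`. -/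
def IsMoorePenrose {n : ℕ} (L Lp : Matrix (Fin n) (Fin n) ℝ) : Prop :=
  L * Lp * L = L ∧ Lp * L * Lp = Lp ∧ (L * Lp).IsSymm ∧ (Lp * L).IsSymm

/-- The stability constant `β` of sparse-HFS. -/
def betaHFS (l : ℕ) (γ ε lam1 k : ℝ) : ℝ :=
  1.5 * k * Real.sqrt l / ((l : ℝ) * γ * (1 - ε) * lam1 - 1) ^ 2 +
  Real.sqrt 2 * k / ((l : ℝ) * γ * (1 - ε) * lam1 - 1)

/-- `π(l,u) = (lu/(l+u-0.5))·(1/(1 - 1/(2·max{l,u})))`. -/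
def piLU (l u : ℕ) : ℝ :=
  ((l : ℝ) * u / ((l : ℝ) + u - 0.5)) * (1 / (1 - 1 / (2 * ((max l u : ℕ) : ℝ))))

/-! ### Auxiliary lemmas -/

lemma lap_symm {n : ℕ} (A : Matrix (Fin n) (Fin n) ℝ) (h : A.IsSymm) : (Lap A).IsSymm := by
  unfold Matrix.IsSymm Lap
  rw [Matrix.transpose_sub, Matrix.diagonal_transpose, h.eq]

lemma lap_quadform {n : ℕ} (A : Matrix (Fin n) (Fin n) ℝ) (h : A.IsSymm) (x : Fin n → ℝ) :
    x ⬝ᵥ (Lap A).mulVec x = (1/2) * ∑ i, ∑ j, A i j * (x i - x j)^2 := by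
  have hsym : ∀ i j, A i j = A j i := fun i j => h.apply j i
  have S3 : ∑ i, ∑ j, A i j * (x j)^2 = ∑ i, ∑ j, A i j * (x i)^2 := by
    rw [Finset.sum_comm]
    exact Finset.sum_congr rfl fun i _ => Finset.sum_congr rfl fun j _ => by rw [hsym]
  have t1 : x ⬝ᵥ (Matrix.diagonal (fun i => ∑ j, A i j)).mulVec x = ∑ i, ∑ j, A i j * (x i)^2 := by
    simp only [dotProduct, Matrix.mulVec_diagonal]
    exact Finset.sum_congr rfl fun i _ => by
      rw [Finset.sum_mul, Finset.mul_sum]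
      exact Finset.sum_congr rfl fun j _ => by ring
  have t2 : x ⬝ᵥ A.mulVec x = ∑ i, ∑ j, A i j * (x i * x j) := by
    simp only [dotProduct, Matrix.mulVec, Finset.mul_sum]
    exact Finset.sum_congr rfl fun i _ => Finset.sum_congr rfl fun j _ => by ring
  have lhs : x ⬝ᵥ (Lap A).mulVec x
      = (∑ i, ∑ j, A i j * (x i)^2) - ∑ i, ∑ j, A i j * (x i * x j) := by
    rw [Lap, Matrix.sub_mulVec, dotProduct_sub, t1, t2]
  have expand : ∑ i, ∑ j, A i j * (x i - x j)^2
      = (∑ i, ∑ j, A i j * (x i)^2) - 2 * (∑ i, ∑ j, A i j * (x i * x j))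
        + ∑ i, ∑ j, A i j * (x j)^2 := by
    have step : ∀ i, ∑ j, A i j * (x i - x j)^2
        = (∑ j, A i j * (x i)^2) - 2 * (∑ j, A i j * (x i * x j)) + ∑ j, A i j * (x j)^2 := by
      intro i
      rw [Finset.mul_sum, ← Finset.sum_sub_distrib, ← Finset.sum_add_distrib]
      exact Finset.sum_congr rfl fun j _ => by ring
    rw [Finset.sum_congr rfl fun i _ => step i]
    rw [Finset.sum_add_distrib, Finset.sum_sub_distrib, ← Finset.mul_sum]
  rw [lhs, expand, S3]; ring

lemma lap_mulVec_one {n : ℕ} (A : Matrix (Fin n) (Fin n) ℝ) :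
    (Lap A).mulVec (fun _ => (1:ℝ)) = 0 := by
  funext i
  simp [Lap, Matrix.mulVec, dotProduct, Matrix.sub_apply, sub_mul,
    Finset.sum_sub_distrib, Matrix.diagonal_apply, Finset.sum_ite_eq]

lemma quad_zero_const {n : ℕ} (A : Matrix (Fin n) (Fin n) ℝ)
    (hGc : GraphConnected A) (x : Fin n → ℝ)
    (hq : ∀ i j, A i j * (x i - x j)^2 = 0) : ∀ i j, x i = x j := by
  have step : ∀ i j : Fin n, (SimpleGraph.fromRel (fun i j => 0 < A i j)).Adj i j → x i = x j := by
    intro i j hadj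
    rcases hadj with ⟨hne, h1 | h1⟩
    · have h2 : (x i - x j)^2 = 0 := by
        rcases mul_eq_zero.1 (hq i j) with h | h
        · exact absurd h (ne_of_gt h1)
        · exact h
      have := pow_eq_zero_iff (n := 2) (by norm_num) |>.1 h2
      linarith [sub_eq_zero.1 this]
    · have h2 : (x j - x i)^2 = 0 := by
        rcases mul_eq_zero.1 (hq j i) with h | h
        · exact absurd h (ne_of_gt h1)
        · exact h
      have := pow_eq_zero_iff (n := 2) (by norm_num) |>.1 h2
      linarith [sub_eq_zero.1 this]
  intro i j
  obtain ⟨w⟩ := hGc.preconnected i j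
  induction w with
  | nil => rfl
  | cons h p ih => exact (step _ _ h).trans ih

lemma pinv_unique {n : ℕ} (L P Q : Matrix (Fin n) (Fin n) ℝ)
    (hP : IsMoorePenrose L P) (hQ : IsMoorePenrose L Q) : P = Q := by
  obtain ⟨hP1, hP2, hP3, hP4⟩ := hP
  obtain ⟨hQ1, hQ2, hQ3, hQ4⟩ := hQ
  have h1 : L * P = L * Q := by
    calc L * P = (L * Q * L) * P := by rw [hQ1]
    _ = (L * Q) * (L * P) := by simp only [Matrix.mul_assoc]
    _ = (L * Q)ᵀ * (L * P)ᵀ := by rw [hQ3.eq, hP3.eq]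
    _ = ((L * P) * (L * Q))ᵀ := (Matrix.transpose_mul _ _).symm
    _ = ((L * P * L) * Q)ᵀ := by simp only [Matrix.mul_assoc]
    _ = (L * Q)ᵀ := by rw [hP1]
    _ = L * Q := hQ3.eq
  have h2 : P * L = Q * L := by
    calc P * L = P * (L * Q * L) := by rw [hQ1]
    _ = (P * L) * (Q * L) := by simp only [Matrix.mul_assoc]
    _ = (P * L)ᵀ * (Q * L)ᵀ := by rw [hP4.eq, hQ4.eq]
    _ = ((Q * L) * (P * L))ᵀ := (Matrix.transpose_mul _ _).symm
    _ = (Q * (L * P * L))ᵀ := by simp only [Matrix.mul_assoc]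
    _ = (Q * L)ᵀ := by rw [hP1]
    _ = Q * L := hQ4.eq
  calc P = P * L * P := hP2.symm
  _ = P * (L * Q) := by rw [Matrix.mul_assoc, h1]
  _ = (P * L) * Q := by rw [← Matrix.mul_assoc]
  _ = (Q * L) * Q := by rw [h2]
  _ = Q := hQ2

lemma pinv_transpose {n : ℕ} (L P : Matrix (Fin n) (Fin n) ℝ)
    (hP : IsMoorePenrose L P) : IsMoorePenrose Lᵀ Pᵀ := by
  obtain ⟨hP1, hP2, hP3, hP4⟩ := hP
  refine ⟨?_, ?_, ?_, ?_⟩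
  · rw [← Matrix.transpose_mul, ← Matrix.transpose_mul, ← Matrix.mul_assoc, hP1]
  · rw [← Matrix.transpose_mul, ← Matrix.transpose_mul, ← Matrix.mul_assoc, hP2]
  · rw [← Matrix.transpose_mul]; exact hP4.transpose
  · rw [← Matrix.transpose_mul]; exact hP3.transpose

lemma pinv_symm {n : ℕ} (L P : Matrix (Fin n) (Fin n) ℝ) (hL : L.IsSymm)
    (hP : IsMoorePenrose L P) : P.IsSymm := by
  have h := pinv_transpose L P hP
  rw [hL.eq] at h
  exact (pinv_unique L P Pᵀ hP h).symm

lemma dot_sym {n : ℕ} (M : Matrix (Fin n) (Fin n) ℝ) (hM : M.IsSymm) (x y : Fin n → ℝ) :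
    x ⬝ᵥ M.mulVec y = (M.mulVec x) ⬝ᵥ y := by
  rw [Matrix.dotProduct_mulVec]
  congr 1
  rw [← Matrix.mulVec_transpose, hM.eq]

lemma pinv_comm {n : ℕ} (L P : Matrix (Fin n) (Fin n) ℝ) (hL : L.IsSymm)
    (hP : IsMoorePenrose L P) : L * P = P * L := by
  have hPs := pinv_symm L P hL hP
  calc L * P = (L * P)ᵀ := hP.2.2.1.eq.symm
  _ = Pᵀ * Lᵀ := Matrix.transpose_mul _ _
  _ = P * L := by rw [hPs.eq, hL.eq]

lemma pinv_one {n : ℕ} (L P : Matrix (Fin n) (Fin n) ℝ) (hL : L.IsSymm)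
    (hP : IsMoorePenrose L P) (hone : L.mulVec (fun _ => (1:ℝ)) = 0) :
    P.mulVec (fun _ => (1:ℝ)) = 0 := by
  have hc := pinv_comm L P hL hP
  have hrw : P = P * P * L := by
    rw [Matrix.mul_assoc, ← hc, ← Matrix.mul_assoc, hP.2.1]
  conv_lhs => rw [hrw]
  rw [← Matrix.mulVec_mulVec, hone, Matrix.mulVec_zero]

lemma proj_id {n : ℕ} (hn : 2 ≤ n) (L P : Matrix (Fin n) (Fin n) ℝ) (hL : L.IsSymm)
    (hP : IsMoorePenrose L P)
    (hker : ∀ z : Fin n → ℝ, z ⬝ᵥ L.mulVec z = 0 → ∀ i j, z i = z j)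
    (hone : L.mulVec (fun _ => (1:ℝ)) = 0)
    (x : Fin n → ℝ) (hx : ∑ i, x i = 0) : L.mulVec (P.mulVec x) = x := by
  have hc := pinv_comm L P hL hP
  have hLLP : L * (L * P) = L := by
    rw [hc, ← Matrix.mul_assoc, hP.1]
  set r : Fin n → ℝ := x - L.mulVec (P.mulVec x) with hr
  have hLr : L.mulVec r = 0 := by
    rw [hr, Matrix.mulVec_sub, Matrix.mulVec_mulVec, Matrix.mulVec_mulVec,
      Matrix.mul_assoc L L P, hLLP, sub_self]
  have hconst := hker r (by rw [hLr, dotProduct_zero])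
  have hs : ∑ i, (L.mulVec (P.mulVec x)) i = 0 := by
    have h1 : ∑ i, (L.mulVec (P.mulVec x)) i = (fun _ => (1:ℝ)) ⬝ᵥ L.mulVec (P.mulVec x) := by
      simp [dotProduct]
    rw [h1, dot_sym L hL, hone, zero_dotProduct]
  have hrs : ∑ i, r i = 0 := by
    simp only [hr, Pi.sub_apply, Finset.sum_sub_distrib, hx, hs, sub_zero]
  have hr0 : r = 0 := by
    funext i
    have hsum : ∑ j, r j = (n : ℝ) * r i := by
      rw [Finset.sum_congr rfl fun j _ => hconst j i]
      simp [Finset.card_univ]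
    have hn0 : (n:ℝ) ≠ 0 := Nat.cast_ne_zero.2 (by omega)
    have : (n:ℝ) * r i = 0 := by rw [← hsum, hrs]
    simpa [hn0] using mul_eq_zero.1 this
  have hxr : x - L.mulVec (P.mulVec x) = 0 := hr ▸ hr0
  exact (sub_eq_zero.1 hxr).symm

lemma var_bound {n : ℕ} (L P : Matrix (Fin n) (Fin n) ℝ) (hL : L.IsSymm)
    (hPSD : ∀ z : Fin n → ℝ, 0 ≤ z ⬝ᵥ L.mulVec z)
    (x y : Fin n → ℝ) (hproj : L.mulVec (P.mulVec x) = x) :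
    2 * (x ⬝ᵥ y) - y ⬝ᵥ L.mulVec y ≤ x ⬝ᵥ P.mulVec x := by
  set z := P.mulVec x with hz
  have h0 := hPSD (y - z)
  rw [Matrix.mulVec_sub, sub_dotProduct, dotProduct_sub, dotProduct_sub,
    hproj] at h0
  have e2 : z ⬝ᵥ L.mulVec y = x ⬝ᵥ y := by rw [dot_sym L hL, hproj]
  have e1 : y ⬝ᵥ x = x ⬝ᵥ y := dotProduct_comm _ _
  have e3 : z ⬝ᵥ x = x ⬝ᵥ z := dotProduct_comm _ _
  rw [e1, e2, e3] at h0
  linarith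

lemma var_eq {n : ℕ} (L P : Matrix (Fin n) (Fin n) ℝ) (hL : L.IsSymm)
    (x : Fin n → ℝ) (hproj : L.mulVec (P.mulVec x) = x) :
    (P.mulVec x) ⬝ᵥ L.mulVec (P.mulVec x) = x ⬝ᵥ P.mulVec x := by
  rw [dot_sym L hL, hproj]

lemma dot_reduce {n : ℕ} (L P : Matrix (Fin n) (Fin n) ℝ) (hL : L.IsSymm)
    (hP : IsMoorePenrose L P) (hone : L.mulVec (fun _ => (1:ℝ)) = 0)
    (x : Fin n → ℝ) (c : ℝ) :
    (x - c • fun _ => (1:ℝ)) ⬝ᵥ P.mulVec (x - c • fun _ => (1:ℝ)) = x ⬝ᵥ P.mulVec x := by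
  have hPs := pinv_symm L P hL hP
  have hPone := pinv_one L P hL hP hone
  have h1 : P.mulVec (x - c • fun _ => (1:ℝ)) = P.mulVec x := by
    rw [Matrix.mulVec_sub, Matrix.mulVec_smul, hPone, smul_zero, sub_zero]
  have h2 : (fun _ => (1:ℝ)) ⬝ᵥ P.mulVec x = 0 := by
    rw [dot_sym P hPs, hPone, zero_dotProduct]
  rw [h1, sub_dotProduct, smul_dotProduct, h2, smul_zero, sub_zero]

/-- quadratic forms of the pseudoinverses satisfy
`(1/(1+ε))·xᵀL_G⁺x ≤ xᵀL_H⁺x ≤ (1/(1−ε))·xᵀL_G⁺x`. -/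
theorem stmt_16 {n : ℕ} (hn : 2 ≤ n)
    (AG AH : Matrix (Fin n) (Fin n) ℝ)
    (hG : IsWeightedGraph AG) (hGc : GraphConnected AG)
    (hH : IsWeightedGraph AH)
    (ε : ℝ) (hε0 : 0 ≤ ε) (hε1 : ε < 1)
    (hsp : IsSparsifier (Lap AG) (Lap AH) ε)
    (LGp LHp : Matrix (Fin n) (Fin n) ℝ)
    (hLGp : IsMoorePenrose (Lap AG) LGp) (hLHp : IsMoorePenrose (Lap AH) LHp) :
    ∀ x : Fin n → ℝ,
      (1 / (1 + ε)) * (x ⬝ᵥ LGp.mulVec x) ≤ x ⬝ᵥ LHp.mulVec x ∧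
        x ⬝ᵥ LHp.mulVec x ≤ (1 / (1 - ε)) * (x ⬝ᵥ LGp.mulVec x) := by
  intro x
  have h1e : (0:ℝ) < 1 - ε := by linarith
  have h2e : (0:ℝ) < 1 + ε := by linarith
  have hLGsym := lap_symm AG hG.1
  have hLHsym := lap_symm AH hH.1
  have hGpsd : ∀ z : Fin n → ℝ, 0 ≤ z ⬝ᵥ (Lap AG).mulVec z := by
    intro z
    rw [lap_quadform AG hG.1]
    have : 0 ≤ ∑ i, ∑ j, AG i j * (z i - z j)^2 :=
      Finset.sum_nonneg fun i _ => Finset.sum_nonneg fun j _ =>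
        mul_nonneg (hG.2.1 i j) (sq_nonneg _)
    linarith
  have hHpsd : ∀ z : Fin n → ℝ, 0 ≤ z ⬝ᵥ (Lap AH).mulVec z := fun z =>
    le_trans (mul_nonneg h1e.le (hGpsd z)) (hsp z).1
  have hGker : ∀ z : Fin n → ℝ, z ⬝ᵥ (Lap AG).mulVec z = 0 → ∀ i j, z i = z j := by
    intro z hz
    apply quad_zero_const AG hGc z
    have hsum : ∑ i, ∑ j, AG i j * (z i - z j)^2 = 0 := by
      rw [lap_quadform AG hG.1] at hz; linarith
    intro i j
    have h1 := (Finset.sum_eq_zero_iff_of_nonneg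
      (fun i _ => Finset.sum_nonneg fun j _ => mul_nonneg (hG.2.1 _ _) (sq_nonneg _))).1
      hsum i (Finset.mem_univ i)
    exact (Finset.sum_eq_zero_iff_of_nonneg
      (fun j _ => mul_nonneg (hG.2.1 _ _) (sq_nonneg _))).1 h1 j (Finset.mem_univ j)
  have hHker : ∀ z : Fin n → ℝ, z ⬝ᵥ (Lap AH).mulVec z = 0 → ∀ i j, z i = z j := by
    intro z hz
    apply hGker z
    have h1 := (hsp z).1
    rw [hz] at h1
    have h2 := hGpsd z
    apply le_antisymm _ h2
    nlinarith
  have hGone := lap_mulVec_one AG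
  have hHone := lap_mulVec_one AH
  set c : ℝ := (∑ i, x i) / n with hc
  set x₀ : Fin n → ℝ := x - c • fun _ => (1:ℝ) with hx₀def
  have hn0 : (n:ℝ) ≠ 0 := Nat.cast_ne_zero.2 (by omega)
  have hx₀ : ∑ i, x₀ i = 0 := by
    simp only [hx₀def, Pi.sub_apply, Pi.smul_apply, smul_eq_mul, mul_one,
      Finset.sum_sub_distrib, Finset.sum_const, Finset.card_univ, Fintype.card_fin,
      nsmul_eq_mul, hc]
    field_simp
    ring
  have hprojG := proj_id hn (Lap AG) LGp hLGsym hLGp hGker hGone x₀ hx₀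
  have hprojH := proj_id hn (Lap AH) LHp hLHsym hLHp hHker hHone x₀ hx₀
  have hredG := dot_reduce (Lap AG) LGp hLGsym hLGp hGone x c
  have hredH := dot_reduce (Lap AH) LHp hLHsym hLHp hHone x c
  rw [← hx₀def] at hredG hredH
  set yG : Fin n → ℝ := LGp.mulVec x₀ with hyG
  set yH : Fin n → ℝ := LHp.mulVec x₀ with hyH
  have eqG : yG ⬝ᵥ (Lap AG).mulVec yG = x₀ ⬝ᵥ yG := var_eq (Lap AG) LGp hLGsym x₀ hprojG
  have eqH : yH ⬝ᵥ (Lap AH).mulVec yH = x₀ ⬝ᵥ yH := var_eq (Lap AH) LHp hLHsym x₀ hprojH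
  constructor
  · -- lower bound
    have vb := var_bound (Lap AH) LHp hLHsym hHpsd x₀ ((1+ε)⁻¹ • yG) hprojH
    have s1 : x₀ ⬝ᵥ ((1+ε)⁻¹ • yG) = (1+ε)⁻¹ * (x₀ ⬝ᵥ yG) := by
      rw [dotProduct_smul, smul_eq_mul]
    have s2 : ((1+ε)⁻¹ • yG) ⬝ᵥ (Lap AH).mulVec ((1+ε)⁻¹ • yG)
        = (1+ε)⁻¹ * ((1+ε)⁻¹ * (yG ⬝ᵥ (Lap AH).mulVec yG)) := by
      rw [smul_dotProduct, Matrix.mulVec_smul, dotProduct_smul,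
        smul_eq_mul, smul_eq_mul]
    rw [s1, s2] at vb
    have hb : yG ⬝ᵥ (Lap AH).mulVec yG ≤ (1+ε) * (x₀ ⬝ᵥ yG) := by
      have := (hsp yG).2
      rw [eqG] at this
      exact this
    have m : (1+ε)⁻¹ * ((1+ε)⁻¹ * (yG ⬝ᵥ (Lap AH).mulVec yG))
        ≤ (1+ε)⁻¹ * ((1+ε)⁻¹ * ((1+ε) * (x₀ ⬝ᵥ yG))) := by
      apply mul_le_mul_of_nonneg_left _ (inv_nonneg.2 h2e.le)
      exact mul_le_mul_of_nonneg_left hb (inv_nonneg.2 h2e.le)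
    have e : (1+ε)⁻¹ * ((1+ε)⁻¹ * ((1+ε) * (x₀ ⬝ᵥ yG))) = (1+ε)⁻¹ * (x₀ ⬝ᵥ yG) := by
      field_simp
    rw [e] at m
    have key : (1+ε)⁻¹ * (x₀ ⬝ᵥ yG) ≤ x₀ ⬝ᵥ LHp.mulVec x₀ := by linarith
    rw [← hredG, ← hredH]
    rw [one_div]
    calc (1+ε)⁻¹ * (x₀ ⬝ᵥ LGp.mulVec x₀) = (1+ε)⁻¹ * (x₀ ⬝ᵥ yG) := by rw [hyG]
    _ ≤ x₀ ⬝ᵥ LHp.mulVec x₀ := key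
  · -- upper bound
    have vb := var_bound (Lap AG) LGp hLGsym hGpsd x₀ ((1-ε) • yH) hprojG
    have s1 : x₀ ⬝ᵥ ((1-ε) • yH) = (1-ε) * (x₀ ⬝ᵥ yH) := by
      rw [dotProduct_smul, smul_eq_mul]
    have s2 : ((1-ε) • yH) ⬝ᵥ (Lap AG).mulVec ((1-ε) • yH)
        = (1-ε) * ((1-ε) * (yH ⬝ᵥ (Lap AG).mulVec yH)) := by
      rw [smul_dotProduct, Matrix.mulVec_smul, dotProduct_smul,
        smul_eq_mul, smul_eq_mul]
    rw [s1, s2] at vb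
    have hb : (1-ε) * (yH ⬝ᵥ (Lap AG).mulVec yH) ≤ x₀ ⬝ᵥ yH := by
      have := (hsp yH).1
      rw [eqH] at this
      exact this
    have m : (1-ε) * ((1-ε) * (yH ⬝ᵥ (Lap AG).mulVec yH)) ≤ (1-ε) * (x₀ ⬝ᵥ yH) :=
      mul_le_mul_of_nonneg_left hb h1e.le
    have key : (1-ε) * (x₀ ⬝ᵥ yH) ≤ x₀ ⬝ᵥ LGp.mulVec x₀ := by linarith
    rw [← hredG, ← hredH]
    rw [div_mul_eq_mul_div, one_mul, le_div_iff₀ h1e]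
    calc (x₀ ⬝ᵥ LHp.mulVec x₀) * (1-ε) = (1-ε) * (x₀ ⬝ᵥ yH) := by rw [hyH]; ring
    _ ≤ x₀ ⬝ᵥ LGp.mulVec x₀ := key
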